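/- In a trim lattice L, if y and z both cover w and γ(w ⋖ y) < γ(w ⋖ z), where γ(u ⋖ v) = min{i : u ∨ (x_i ∧ v) = v} for the left modular chain x_0 ⋖ ... ⋖ x_n, then y ∨ z covers z. -/

import Mathlib

variable {α : Type*}

/-- An element is join-irreducible if it is not the minimum and is not a join
of two strictly smaller elements. -/
def JoinIrred [Lattice α] (a : α) : Prop :=
  ¬ IsBot a ∧ ∀ b c : α, b < a → c < a → b ⊔ c ≠ a

/-- An element is meet-irreducible if it is not the maximum and is not a meet
of two strictly larger elements. -/
def MeetIrred [Lattice α] (a : α) : Prop :=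
  ¬ IsTop a ∧ ∀ b c : α, a < b → a < c → b ⊓ c ≠ a

/-- An element `x` is left modular if `(y ⊔ x) ⊓ z = y ⊔ (x ⊓ z)` for all `y < z`. -/
def LeftModular [Lattice α] (x : α) : Prop :=
  ∀ y z : α, y < z → (y ⊔ x) ⊓ z = y ⊔ (x ⊓ z)

/-- A maximal chain `⊥ = x 0 ⋖ x 1 ⋖ ⋯ ⋖ x n = ⊤` all of whose elements are left modular. -/
def IsLMChain [Lattice α] {n : ℕ} (x : Fin (n + 1) → α) : Prop :=
  IsBot (x 0) ∧ IsTop (x (Fin.last n)) ∧ (∀ i : Fin n, x i.castSucc ⋖ x i.succ) ∧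
    ∀ i, LeftModular (x i)

/-- A finite lattice is trim if it has a left modular maximal chain of `n + 1` elements,
exactly `n` join-irreducibles and exactly `n` meet-irreducibles. -/
def Trim (α : Type*) [Lattice α] [Finite α] : Prop :=
  ∃ (n : ℕ) (x : Fin (n + 1) → α), IsLMChain x ∧
    Nat.card {v : α // JoinIrred v} = n ∧ Nat.card {v : α // MeetIrred v} = n

section AuxLemmas

variable [Lattice α] [Finite α]

/-- In a finite lattice, if `B ≰ A` there is a join-irreducible below `B` not below `A`. -/
lemma exists_joinIrred_le {A B : α} (h : ¬ B ≤ A) :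
    ∃ J : α, JoinIrred J ∧ J ≤ B ∧ ¬ J ≤ A := by
  obtain ⟨J, ⟨hJB, hJA⟩, hmin⟩ := (wellFounded_lt (α := α)).has_min
      {t | t ≤ B ∧ ¬ t ≤ A} ⟨B, le_refl B, h⟩
  refine ⟨J, ⟨fun hbot => hJA (hbot A), ?_⟩, hJB, hJA⟩
  intro b c hb hc hbc
  have hb' : b ≤ A := by
    by_contra hbA
    exact hmin b ⟨hb.le.trans hJB, hbA⟩ hb
  have hc' : c ≤ A := by
    by_contra hcA
    exact hmin c ⟨hc.le.trans hJB, hcA⟩ hc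
  exact hJA (hbc ▸ sup_le hb' hc')

/-- In a finite lattice, if `B ≰ A` there is a meet-irreducible above `A` not above `B`. -/
lemma exists_meetIrred_ge {A B : α} (h : ¬ B ≤ A) :
    ∃ m : α, MeetIrred m ∧ A ≤ m ∧ ¬ B ≤ m := by
  obtain ⟨m, ⟨hAm, hBm⟩, hmax⟩ := (wellFounded_gt (α := α)).has_min
      {t | A ≤ t ∧ ¬ B ≤ t} ⟨A, le_refl A, h⟩
  refine ⟨m, ⟨fun htop => hBm (htop B), ?_⟩, hAm, hBm⟩
  intro b c hb hc hbc
  have hb' : B ≤ b := by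
    by_contra hbB
    exact hmax b ⟨hAm.trans hb.le, hbB⟩ hb
  have hc' : B ≤ c := by
    by_contra hcB
    exact hmax c ⟨hAm.trans hc.le, hcB⟩ hc
  exact hBm (hbc ▸ le_inf hb' hc')

/-- In a finite lattice, any strict inequality contains a covering step at the bottom. -/
lemma exists_covBy_le' {a b : α} (h : a < b) : ∃ c, a ⋖ c ∧ c ≤ b := by
  obtain ⟨c, ⟨hac, hcb⟩, hmin⟩ := (wellFounded_lt (α := α)).has_min
      {t | a < t ∧ t ≤ b} ⟨b, h, le_refl b⟩
  exact ⟨c, ⟨hac, fun d had hdc => hmin d ⟨had, hdc.le.trans hcb⟩ hdc⟩, hcb⟩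

end AuxLemmas

/-- In a trim lattice with left modular chain `x`, if `y` and `z` both cover `w` and
`γ(w ⋖ y) < γ(w ⋖ z)` where `γ(u ⋖ v) = min {i | u ⊔ (x i ⊓ v) = v}`, then
`y ⊔ z` covers `z`. -/
theorem weak_semimodularity [Lattice α] [Finite α] {n : ℕ}
    (x : Fin (n + 1) → α) (hx : IsLMChain x)
    (hJ : Nat.card {v : α // JoinIrred v} = n)
    (hM : Nat.card {v : α // MeetIrred v} = n)
    {w y z : α} (hy : w ⋖ y) (hz : w ⋖ z)
    (i j : Fin (n + 1))
    (hi : IsLeast {l : Fin (n + 1) | w ⊔ (x l ⊓ y) = y} i)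
    (hj : IsLeast {l : Fin (n + 1) | w ⊔ (x l ⊓ z) = z} j)
    (hij : i < j) :
    z ⋖ y ⊔ z := by
  classical
  obtain ⟨hbot, htop, hcov, hlm⟩ := hx
  -- ℕ-indexed chain
  set X : ℕ → α := fun l => x ⟨min l n, by omega⟩ with hXdef
  have hXeq : ∀ (l : ℕ) (hl : l ≤ n), X l = x ⟨l, by omega⟩ := by
    intro l hl
    exact congrArg x (Fin.ext (by simp [hXdef]; omega))
  have hsm : StrictMono x := by
    rw [Fin.strictMono_iff_lt_succ]
    intro k
    exact (hcov k).lt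
  have hXmono : Monotone X := by
    intro a b hab
    exact hsm.monotone (by simp [Fin.mk_le_mk]; omega)
  have hX0 : IsBot (X 0) := by
    have : X 0 = x 0 := congrArg x (Fin.ext (by simp))
    rw [this]; exact hbot
  have hXtop : ∀ l, n ≤ l → IsTop (X l) := by
    intro l hl
    have : X l = x (Fin.last n) := congrArg x (Fin.ext (by simp [Fin.last]; omega))
    rw [this]; exact htop
  have hXcov : ∀ k : ℕ, 1 ≤ k → k ≤ n → X (k - 1) ⋖ X k := by
    intro k h1 h2
    have hc := hcov ⟨k - 1, by omega⟩
    have e1 : X (k - 1) = x (Fin.castSucc ⟨k - 1, by omega⟩) :=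
      congrArg x (Fin.ext (by simp [Fin.coe_castSucc]; omega))
    have e2 : X k = x (Fin.succ ⟨k - 1, by omega⟩) :=
      congrArg x (Fin.ext (by simp [Fin.val_succ]; omega))
    rw [e1, e2]; exact hc
  have hXlm : ∀ l : ℕ, LeftModular (X l) := fun l => hlm _
  have hin : (i : ℕ) ≤ n := Nat.lt_succ_iff.mp i.isLt
  have hjn : (j : ℕ) ≤ n := Nat.lt_succ_iff.mp j.isLt
  have hijN : (i : ℕ) < (j : ℕ) := hij
  -- Unique join-irreducible per level
  have hUJ : ∀ k : ℕ, 1 ≤ k → k ≤ n → ∀ J J' : α, JoinIrred J → JoinIrred J' →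
      J ≤ X k → ¬ J ≤ X (k - 1) → J' ≤ X k → ¬ J' ≤ X (k - 1) → J = J' := by
    have hexlvl : ∀ J : {v : α // JoinIrred v}, ∃ l, (J : α) ≤ X l :=
      fun J => ⟨n, (hXtop n le_rfl) _⟩
    have hlvlmem : ∀ J : {v : α // JoinIrred v},
        Nat.find (hexlvl J) - 1 < n := by
      intro J
      have h1 : Nat.find (hexlvl J) ≤ n := Nat.find_le ((hXtop n le_rfl) _)
      have h2 : Nat.find (hexlvl J) ≠ 0 := by
        intro h0
        have hspec := Nat.find_spec (hexlvl J)
        rw [h0] at hspec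
        exact J.2.1 (fun a => hspec.trans (hX0 a))
      omega
    set lvl : {v : α // JoinIrred v} → Fin n := fun J => ⟨Nat.find (hexlvl J) - 1, hlvlmem J⟩
      with hlvldef
    have hlvl_spec : ∀ (J : {v : α // JoinIrred v}) (k : ℕ), 1 ≤ k → k ≤ n →
        (J : α) ≤ X k → ¬ (J : α) ≤ X (k - 1) → (lvl J : ℕ) = k - 1 := by
      intro J k h1 h2 hle hnle
      have hfind : Nat.find (hexlvl J) = k := by
        rcases lt_trichotomy (Nat.find (hexlvl J)) k with h | h | h
        · exact absurd ((Nat.find_spec (hexlvl J)).trans (hXmono (by omega))) hnle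
        · exact h
        · exact absurd hle (Nat.find_min (hexlvl J) h)
      simp [hlvldef, hfind]
    have hsurj : Function.Surjective lvl := by
      rintro ⟨k0, hk0⟩
      have hnb : ¬ X (k0 + 1) ≤ X k0 := by
        have := (hXcov (k0 + 1) (by omega) (by omega)).lt
        simpa using this.not_ge
      obtain ⟨J, hJirr, hJle, hJnle⟩ := exists_joinIrred_le hnb
      refine ⟨⟨J, hJirr⟩, ?_⟩
      have := hlvl_spec ⟨J, hJirr⟩ (k0 + 1) (by omega) (by omega) hJle (by simpa using hJnle)
      exact Fin.ext (by simpa using this)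
    have hinj : Function.Injective lvl :=
      ((Nat.bijective_iff_surjective_and_card lvl).mpr ⟨hsurj, by simp [hJ]⟩).1
    intro k h1 h2 J J' hJ1 hJ2 ha hb hc hd
    have heq : lvl ⟨J, hJ1⟩ = lvl ⟨J', hJ2⟩ := by
      apply Fin.ext
      rw [hlvl_spec ⟨J, hJ1⟩ k h1 h2 ha hb, hlvl_spec ⟨J', hJ2⟩ k h1 h2 hc hd]
    exact congrArg Subtype.val (hinj heq)
  -- Unique meet-irreducible per level
  have hUM : ∀ k : ℕ, 1 ≤ k → k ≤ n → ∀ M M' : α, MeetIrred M → MeetIrred M' →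
      X (k - 1) ≤ M → ¬ X k ≤ M → X (k - 1) ≤ M' → ¬ X k ≤ M' → M = M' := by
    have hexlvl : ∀ m : {v : α // MeetIrred v}, ∃ l, ¬ X l ≤ (m : α) := by
      intro m
      refine ⟨n, fun habs => m.2.1 (fun a => ?_)⟩
      exact ((hXtop n le_rfl) a).trans habs
    have hlvlmem : ∀ m : {v : α // MeetIrred v}, Nat.find (hexlvl m) - 1 < n := by
      intro m
      have h1 : Nat.find (hexlvl m) ≤ n := Nat.find_le (by
        intro habs
        exact m.2.1 (fun a => ((hXtop n le_rfl) a).trans habs))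
      have h2 : Nat.find (hexlvl m) ≠ 0 := by
        intro h0
        have hspec := Nat.find_spec (hexlvl m)
        rw [h0] at hspec
        exact hspec (hX0 _)
      omega
    set lvl : {v : α // MeetIrred v} → Fin n := fun m => ⟨Nat.find (hexlvl m) - 1, hlvlmem m⟩
      with hlvldef
    have hlvl_spec : ∀ (m : {v : α // MeetIrred v}) (k : ℕ), 1 ≤ k → k ≤ n →
        X (k - 1) ≤ (m : α) → ¬ X k ≤ (m : α) → (lvl m : ℕ) = k - 1 := by
      intro m k h1 h2 hle hnle
      have hfind : Nat.find (hexlvl m) = k := by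
        rcases lt_trichotomy (Nat.find (hexlvl m)) k with h | h | h
        · exact absurd ((hXmono (show Nat.find (hexlvl m) ≤ k - 1 by omega)).trans hle)
            (Nat.find_spec (hexlvl m))
        · exact h
        · have := Nat.find_min (hexlvl m) h
          exact absurd (not_not.mp this) hnle
      simp [hlvldef, hfind]
    have hsurj : Function.Surjective lvl := by
      rintro ⟨k0, hk0⟩
      have hnb : ¬ X (k0 + 1) ≤ X k0 := by
        have := (hXcov (k0 + 1) (by omega) (by omega)).lt
        simpa using this.not_ge
      obtain ⟨m, hmirr, hmle, hmnle⟩ := exists_meetIrred_ge hnb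
      refine ⟨⟨m, hmirr⟩, ?_⟩
      have := hlvl_spec ⟨m, hmirr⟩ (k0 + 1) (by omega) (by omega) (by simpa using hmle) hmnle
      exact Fin.ext (by simpa using this)
    have hinj : Function.Injective lvl :=
      ((Nat.bijective_iff_surjective_and_card lvl).mpr ⟨hsurj, by simp [hM]⟩).1
    intro k h1 h2 M M' hM1 hM2 ha hb hc hd
    have heq : lvl ⟨M, hM1⟩ = lvl ⟨M', hM2⟩ := by
      apply Fin.ext
      rw [hlvl_spec ⟨M, hM1⟩ k h1 h2 ha hb, hlvl_spec ⟨M', hM2⟩ k h1 h2 hc hd]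
    exact congrArg Subtype.val (hinj heq)
  -- basic facts about the labels of the two given covers
  have hwy_eq : w ⊔ (x i ⊓ y) = y := hi.1
  have hwz_eq : w ⊔ (x j ⊓ z) = z := hj.1
  have hxiX : x i = X (i : ℕ) := by
    rw [hXeq (i : ℕ) hin]
  have hiN1 : 1 ≤ (i : ℕ) := by
    by_contra h0
    have hi0 : i = 0 := Fin.ext (by rw [Fin.val_zero]; omega)
    have : x i ⊓ y ≤ w := by
      rw [hi0]
      exact inf_le_left.trans (hbot w)
    rw [sup_eq_left.mpr this] at hwy_eq
    exact hy.lt.ne hwy_eq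
  have hyle : y ≤ w ⊔ X (i : ℕ) := by
    conv_lhs => rw [← hwy_eq]
    rw [← hxiX]
    exact sup_le le_sup_left (inf_le_left.trans le_sup_right)
  have hylow : ∀ l : ℕ, l < (i : ℕ) → X l ⊓ y ≤ w := by
    intro l hl
    have hln : l ≤ n := by omega
    have hnot : w ⊔ (x ⟨l, by omega⟩ ⊓ y) ≠ y := by
      intro hmem
      have h2 : (i : ℕ) ≤ l := Fin.le_def.mp (hi.2 hmem)
      omega
    rcases hy.eq_or_eq (le_sup_left : w ≤ w ⊔ (x ⟨l, by omega⟩ ⊓ y))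
        (sup_le hy.lt.le inf_le_right) with h | h
    · rw [hXeq l hln]
      exact le_sup_right.trans h.le
    · exact absurd h hnot
  have hzlow : ∀ l : ℕ, l < (j : ℕ) → X l ⊓ z ≤ w := by
    intro l hl
    have hln : l ≤ n := by omega
    have hnot : w ⊔ (x ⟨l, by omega⟩ ⊓ z) ≠ z := by
      intro hmem
      have h2 : (j : ℕ) ≤ l := Fin.le_def.mp (hj.2 hmem)
      omega
    rcases hz.eq_or_eq (le_sup_left : w ≤ w ⊔ (x ⟨l, by omega⟩ ⊓ z))
        (sup_le hz.lt.le inf_le_right) with h | h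
    · rw [hXeq l hln]
      exact le_sup_right.trans h.le
    · exact absurd h hnot
  have hzlow' : ∀ l : ℕ, l < (i : ℕ) → X l ⊓ z ≤ w := fun l hl => hzlow l (by omega)
  -- THE KEY INDUCTION: no cover of p inside p ⊔ q can have label < i
  have key : ∀ μ : ℕ, μ < (i : ℕ) → ∀ p q r : α, w ⋖ p → w ⋖ q →
      (∀ l : ℕ, l < (i : ℕ) → X l ⊓ p ≤ w) → (∀ l : ℕ, l < (i : ℕ) → X l ⊓ q ≤ w) →
      p ⋖ r → r ≤ p ⊔ q → r ≤ p ⊔ X μ → False := by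
    intro μ
    induction μ using Nat.strong_induction_on with
    | _ μ IH =>
      intro hμi p q r hwp hwq hp hq hpr hrpq hrX
      have hex : ∃ l, r ≤ p ⊔ X l := ⟨μ, hrX⟩
      set k := Nat.find hex with hkdef
      have hkspec : r ≤ p ⊔ X k := Nat.find_spec hex
      have hkmin : ∀ l, l < k → ¬ r ≤ p ⊔ X l := fun l hl => Nat.find_min hex hl
      have hkμ : k ≤ μ := Nat.find_le hrX
      have hk1 : 1 ≤ k := by
        by_contra h0
        have hk0 : k = 0 := by omega
        have : r ≤ p := by
          have h := hkspec
          rw [hk0, sup_eq_left.mpr (hX0 p)] at h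
          exact h
        exact hpr.lt.not_ge this
      have hkn : k ≤ n := by omega
      have hki : k < (i : ℕ) := by omega
      -- for l < k, X l ⊓ r ≤ p
      have hlowr : ∀ l, l < k → X l ⊓ r ≤ p := by
        intro l hl
        rcases hpr.eq_or_eq (le_sup_left : p ≤ p ⊔ (X l ⊓ r))
            (sup_le hpr.lt.le inf_le_right) with h | h
        · exact le_sup_right.trans h.le
        · exact absurd (h ▸ sup_le le_sup_left (inf_le_left.trans le_sup_right) :
            r ≤ p ⊔ X l) (hkmin l hl)
      -- the meet-irreducible separating p ⋖ r
      have hrA : ¬ r ≤ p ⊔ X (k - 1) := hkmin (k - 1) (by omega)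
      obtain ⟨M, hMirr, hAM, hrM⟩ := exists_meetIrred_ge hrA
      have hpM : p ≤ M := le_sup_left.trans hAM
      have hXk1M : X (k - 1) ≤ M := le_sup_right.trans hAM
      have hXkM : ¬ X k ≤ M := fun habs => hrM (hkspec.trans (sup_le hpM habs))
      -- transfer to the q side: X k ≤ q ⊔ X (k-1)
      have hDM : X k ≤ q ⊔ X (k - 1) := by
        by_contra hcon
        obtain ⟨M', hM'irr, hAM', hXkM'⟩ := exists_meetIrred_ge hcon
        have hMM' : M = M' := hUM k hk1 hkn M M' hMirr hM'irr hXk1M hXkM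
          (le_sup_right.trans hAM') hXkM'
        have hqM : q ≤ M := by rw [hMM']; exact le_sup_left.trans hAM'
        exact hrM (hrpq.trans (sup_le hpM hqM))
      -- the join-irreducible added by p ⋖ r
      have hr_eq : r = p ⊔ (X k ⊓ r) := by
        have hLM := hXlm k p r hpr.lt
        rw [inf_eq_right.mpr hkspec] at hLM
        exact hLM
      have hsnp : ¬ X k ⊓ r ≤ p := by
        intro habs
        exact hpr.lt.not_ge (le_of_eq_of_le hr_eq (sup_le le_rfl habs))
      obtain ⟨J, hJirr, hJs, hJp⟩ := exists_joinIrred_le hsnp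
      have hJr : J ≤ r := hJs.trans inf_le_right
      have hJXk : J ≤ X k := hJs.trans inf_le_left
      -- q < p ⊔ q
      have hqpq : q < p ⊔ q := by
        rcases eq_or_lt_of_le (le_sup_right : q ≤ p ⊔ q) with h | h
        · exfalso
          have hpq : p ≤ q := le_sup_left.trans h.ge
          rcases hwq.eq_or_eq hwp.lt.le hpq with h1 | h1
          · exact hwp.lt.ne' h1
          · exact hpr.lt.not_ge (hrpq.trans (by rw [h1, sup_idem]))
        · exact h
      -- J ≤ q ⊔ e  where e = X (k-1) ⊓ (p ⊔ q)
      have hJqe : J ≤ q ⊔ (X (k - 1) ⊓ (p ⊔ q)) := by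
        have h1 : J ≤ (q ⊔ X (k - 1)) ⊓ (p ⊔ q) := le_inf (hJXk.trans hDM) (hJr.trans hrpq)
        rwa [hXlm (k - 1) q (p ⊔ q) hqpq] at h1
      by_cases heq : X (k - 1) ⊓ (p ⊔ q) ≤ q
      · have hJq : J ≤ q := hJqe.trans (sup_le le_rfl heq)
        have hJw : J ≤ w := (le_inf hJXk hJq).trans (hq k hki)
        exact hJp (hJw.trans hwp.lt.le)
      · have hqe : q < q ⊔ (X (k - 1) ⊓ (p ⊔ q)) := left_lt_sup.mpr heq
        obtain ⟨r₂, hqr₂, hr₂⟩ := exists_covBy_le' hqe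
        exact IH (k - 1) (by omega) (by omega) q p r₂ hwq hwp hq hp hqr₂
          (hr₂.trans (sup_le le_sup_left ((inf_le_right.trans (by rw [sup_comm])))))
          (hr₂.trans (sup_le le_sup_left (inf_le_left.trans le_sup_right)))
  -- y ≠ z, z < y ⊔ z
  have hyz : y ≠ z := by
    intro h
    have : i = j := hi.unique (by rw [h]; exact hj)
    exact hij.ne this
  have hzltV : z < y ⊔ z := by
    rcases eq_or_lt_of_le (le_sup_right : z ≤ y ⊔ z) with h | h
    · exfalso
      have hyz' : y ≤ z := le_sup_left.trans h.ge
      rcases hz.eq_or_eq hy.lt.le hyz' with h1 | h1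
      · exact hy.lt.ne' h1
      · exact hyz h1
    · exact h
  -- every cover of z below y ⊔ z equals y ⊔ z
  have hcovers : ∀ r, z ⋖ r → r ≤ y ⊔ z → r = y ⊔ z := by
    intro r hzr hrV
    have hVle : y ⊔ z ≤ z ⊔ X (i : ℕ) :=
      sup_le (hyle.trans (sup_le (hz.lt.le.trans le_sup_left) le_sup_right)) le_sup_left
    have hex : ∃ l, r ≤ z ⊔ X l := ⟨(i : ℕ), hrV.trans hVle⟩
    set k := Nat.find hex with hkdef
    have hkspec : r ≤ z ⊔ X k := Nat.find_spec hex
    have hkmin : ∀ l, l < k → ¬ r ≤ z ⊔ X l := fun l hl => Nat.find_min hex hl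
    have hki : k ≤ (i : ℕ) := Nat.find_le (hrV.trans hVle)
    rcases lt_or_eq_of_le hki with hklt | hkeq
    · exact absurd (key k hklt z y r hz hy hzlow' hylow hzr
        (hrV.trans (by rw [sup_comm])) hkspec) id
    · -- label is exactly i
      have hkspec' : r ≤ z ⊔ X (i : ℕ) := by rw [← hkeq]; exact hkspec
      have hlow : ∀ l, l < (i : ℕ) → X l ⊓ r ≤ z := by
        intro l hl
        rcases hzr.eq_or_eq (le_sup_left : z ≤ z ⊔ (X l ⊓ r))
            (sup_le hzr.lt.le inf_le_right) with h | h
        · exact le_sup_right.trans h.le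
        · refine absurd (h ▸ sup_le le_sup_left (inf_le_left.trans le_sup_right) :
            r ≤ z ⊔ X l) (hkmin l (by omega))
      have hr_eq : r = z ⊔ (X (i : ℕ) ⊓ r) := by
        have hLM := hXlm (i : ℕ) z r hzr.lt
        rw [inf_eq_right.mpr hkspec'] at hLM
        exact hLM
      have hsnz : ¬ X (i : ℕ) ⊓ r ≤ z := by
        intro habs
        exact hzr.lt.not_ge (le_of_eq_of_le hr_eq (sup_le le_rfl habs))
      obtain ⟨J, hJirr, hJs, hJz⟩ := exists_joinIrred_le hsnz
      have hJr : J ≤ r := hJs.trans inf_le_right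
      have hJXi : J ≤ X (i : ℕ) := hJs.trans inf_le_left
      have hJX1 : ¬ J ≤ X ((i : ℕ) - 1) := by
        intro habs
        exact hJz ((le_inf (habs.trans (hXmono (by omega))) hJr).trans (hlow (i - 1) (by omega)))
      -- the join-irreducible added by w ⋖ y
      have hsny : ¬ x i ⊓ y ≤ w := by
        intro habs
        rw [sup_eq_left.mpr habs] at hwy_eq
        exact hy.lt.ne hwy_eq
      obtain ⟨J', hJ'irr, hJ'le, hJ'w⟩ := exists_joinIrred_le hsny
      have hJ'y : J' ≤ y := hJ'le.trans inf_le_right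
      have hJ'Xi : J' ≤ X (i : ℕ) := by rw [← hxiX]; exact hJ'le.trans inf_le_left
      have hJ'X1 : ¬ J' ≤ X ((i : ℕ) - 1) := by
        intro habs
        exact hJ'w ((le_inf habs hJ'y).trans (hylow ((i : ℕ) - 1) (by omega)))
      have hJJ' : J = J' := hUJ (i : ℕ) hiN1 hin J J' hJirr hJ'irr hJXi hJX1 hJ'Xi hJ'X1
      have hywJ' : y = w ⊔ J' := by
        rcases hy.eq_or_eq (le_sup_left : w ≤ w ⊔ J') (sup_le hy.lt.le hJ'y) with h | h
        · exact absurd (le_sup_right.trans h.le) hJ'w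
        · exact h.symm
      have hyr : y ≤ r := by
        rw [hywJ', ← hJJ']
        exact sup_le (hz.lt.le.trans hzr.lt.le) hJr
      exact le_antisymm hrV (sup_le hyr hzr.lt.le)
  refine ⟨hzltV, fun c hzc hcV => ?_⟩
  obtain ⟨r, hzr, hrc⟩ := exists_covBy_le' hzc
  have hrV := hcovers r hzr (hrc.trans hcV.le)
  exact hcV.not_ge (hrV ▸ hrc)
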